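/- Let G be a finite simple graph with nonempty vertex set. Then Z*(G) = 1 if and only if G is a path graph (i.e., G is isomorphic to the path P_n on n vertices for some n ≥ 1). -/

import Mathlib

open Finset

/-- A fort of a graph: a nonempty (finite) set of vertices `F` such that no vertex
outside `F` has exactly one neighbor in `F`. -/
def IsFort {V : Type*} (G : SimpleGraph V) (F : Finset V) : Prop :=
  F.Nonempty ∧ ∀ v ∉ F, ¬ ∃! u, u ∈ F ∧ G.Adj v u

/-- The fort number: the maximum cardinality of a collection of pairwise disjoint forts. -/
noncomputable def fortNumber {V : Type*} (G : SimpleGraph V) : ℕ :=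
  sSup {k | ∃ 𝒞 : Finset (Finset V), (∀ F ∈ 𝒞, IsFort G F) ∧
    (↑𝒞 : Set (Finset V)).Pairwise Disjoint ∧ 𝒞.card = k}

/-- The fractional zero forcing number. -/
noncomputable def fracZ {V : Type*} [Fintype V] (G : SimpleGraph V) : ℝ :=
  sInf {x : ℝ | ∃ ω : V → ℝ, (∀ v, 0 ≤ ω v) ∧
    (∀ F : Finset V, IsFort G F → 1 ≤ ∑ v ∈ F, ω v) ∧ x = ∑ v, ω v}

/-- The set of vertices eventually filled by the zero forcing process started at `S`. -/
inductive ZFForced {V : Type*} (G : SimpleGraph V) (S : Set V) : V → Prop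
  | init (v : V) : v ∈ S → ZFForced G S v
  | force (u w : V) : G.Adj u w → ZFForced G S u →
      (∀ x, G.Adj u x → x ≠ w → ZFForced G S x) → ZFForced G S w

/-- A zero forcing set: starting from `S`, every vertex is eventually filled. -/
def IsZeroForcingSet {V : Type*} (G : SimpleGraph V) (S : Set V) : Prop :=
  ∀ v, ZFForced G S v

/-- The zero forcing number: minimum cardinality of a zero forcing set. -/
noncomputable def zfNumber {V : Type*} (G : SimpleGraph V) : ℕ :=
  sInf {k | ∃ S : Finset V, IsZeroForcingSet G ↑S ∧ S.card = k}


lemma stall {V : Type*} (G : SimpleGraph V) (s : V)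
    (H : ∀ w, G.Adj s w → ∃ x, G.Adj s x ∧ x ≠ w) :
    ∀ x, ZFForced G {s} x → x = s := by
  intro x hx
  induction hx with
  | init v hv => exact hv
  | force u w hadj hu hnb ihu ihnb =>
    subst ihu
    obtain ⟨x, hx1, hx2⟩ := H w hadj
    exact absurd (ihnb x hx1 hx2) (G.ne_of_adj hx1).symm

lemma iso_one {V : Type*} [Fintype V] (G : SimpleGraph V) (h : Fintype.card V = 1) :
    Nonempty (G ≃g SimpleGraph.pathGraph 1) := by
  have hsub : Subsingleton V := Fintype.card_le_one_iff_subsingleton.mp (by omega)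
  refine ⟨⟨Fintype.equivFinOfCardEq h, ?_⟩⟩
  intro a b
  constructor
  · intro hab
    exact absurd (Subsingleton.elim a b ▸ hab) ((SimpleGraph.pathGraph 1).irrefl)
  · intro hab
    exact absurd (Subsingleton.elim a b ▸ hab) (G.irrefl)

open SimpleGraph in
lemma path_of_single_force : ∀ (n : ℕ) (V : Type u) [Fintype V] (G : SimpleGraph V) (s : V),
    Fintype.card V = n → (∀ v, ZFForced G {s} v) →
    ∃ e : G ≃g SimpleGraph.pathGraph n, (e s : Fin n).val = 0 := by
  intro n
  induction n using Nat.strong_induction_on with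
  | _ n ih =>
  intro V _ G s hcard hZ
  classical
  have hpos : 0 < Fintype.card V := Fintype.card_pos_iff.mpr ⟨s⟩
  match n, hcard with
  | 0, hcard => omega
  | 1, hcard =>
    obtain ⟨e⟩ := iso_one G hcard
    refine ⟨e, ?_⟩
    have := (e s).isLt
    omega
  | (m+2), hcard =>
    -- s has a unique neighbor t
    have h2 : 1 < Fintype.card V := by omega
    obtain ⟨x0, hx0⟩ := Fintype.exists_ne_of_one_lt_card h2 s
    have huniq : ∃ t, G.Adj s t ∧ ∀ w, G.Adj s w → w = t := by
      by_contra hcon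
      push_neg at hcon
      exact hx0 (stall G s (fun w hw => hcon w hw) x0 (hZ x0))
    obtain ⟨t, hts, huniq⟩ := huniq
    have htne : t ≠ s := fun h => G.irrefl (h ▸ hts)
    set V' := {x : V // x ≠ s} with hV'
    set G' : SimpleGraph V' := G.comap Subtype.val with hG'
    have hadj' : ∀ a b : V', (G'.Adj a b ↔ G.Adj a.val b.val) := fun a b => Iff.rfl
    set t' : V' := ⟨t, htne⟩ with ht'
    have htrans : ∀ x, ZFForced G {s} x → ∀ hx : x ≠ s, ZFForced G' {t'} ⟨x, hx⟩ := by
      intro x hx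
      induction hx with
      | init v hv => intro h; exact absurd hv h
      | force u w hadj hu hnb ihu ihnb =>
        intro hw
        by_cases hus : u = s
        · subst hus
          have hwt : w = t := huniq w hadj
          subst hwt
          exact ZFForced.init _ rfl
        · refine ZFForced.force (⟨u, hus⟩ : V') (⟨w, hw⟩ : V') hadj (ihu hus) ?_
          rintro ⟨x, hxs⟩ hadjx hnex
          exact ihnb x hadjx (fun h => hnex (Subtype.ext h)) hxs
    have hZ' : ∀ x' : V', ZFForced G' {t'} x' := fun x' => htrans x'.val (hZ x'.val) x'.prop
    have hcard' : Fintype.card V' = m + 1 := by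
      have := Fintype.card_subtype_compl (fun x : V => x = s)
      have h1 : Fintype.card {x : V // x = s} = 1 := Fintype.card_subtype_eq s
      have : Fintype.card {x : V // ¬ x = s} = Fintype.card V - 1 := by rw [this, h1]
      simpa [hV', hcard] using this
    obtain ⟨e', he'⟩ := ih (m+1) (by omega) V' G' t' hcard' hZ'
    -- build the iso
    have hsub : ∀ (j : Fin (m+1)), (e'.symm j).val ≠ s := fun j => (e'.symm j).prop
    refine ⟨⟨⟨fun x => if hx : x = s then (0 : Fin (m+2)) else (e' ⟨x, hx⟩).succ,
      fun i => Fin.cases s (fun j => (e'.symm j).val) i, ?_, ?_⟩, ?_⟩, ?_⟩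
    · intro x
      by_cases hx : x = s
      · simp [hx]
      · simp only [dif_neg hx, Fin.cases_succ]
        have : e'.symm (e' ⟨x, hx⟩) = ⟨x, hx⟩ := e'.symm_apply_apply _
        rw [this]
    · intro i
      refine Fin.cases ?_ ?_ i
      · simp
      · intro j
        simp only [Fin.cases_succ, dif_neg (hsub j)]
        have : (⟨(e'.symm j).val, hsub j⟩ : V') = e'.symm j := rfl
        exact (dif_neg (hsub j)).trans (by rw [this, e'.apply_symm_apply])
    · intro a b
      simp only [RelIso.coe_fn_mk, Equiv.coe_fn_mk]
      have key : ∀ (x y : V) (hx : x ≠ s) (hy : y ≠ s),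
          ((SimpleGraph.pathGraph (m+2)).Adj (dite (x = s) (fun _ => (0 : Fin (m+2)))
              (fun hx => (e' ⟨x, hx⟩).succ)) (dite (y = s) (fun _ => (0 : Fin (m+2)))
              (fun hy => (e' ⟨y, hy⟩).succ)) ↔ G.Adj x y) := by
        intro x y hx hy
        rw [dif_neg hx, dif_neg hy, SimpleGraph.pathGraph_adj]
        have hGxy : G.Adj x y ↔ G'.Adj ⟨x, hx⟩ ⟨y, hy⟩ := Iff.rfl
        rw [hGxy, ← e'.map_rel_iff, SimpleGraph.pathGraph_adj]
        simp only [Fin.val_succ]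
        omega
      have keys : ∀ (y : V) (hy : y ≠ s),
          ((SimpleGraph.pathGraph (m+2)).Adj (0 : Fin (m+2)) (dite (y = s)
              (fun _ => (0 : Fin (m+2))) (fun hy => (e' ⟨y, hy⟩).succ)) ↔ G.Adj s y) := by
        intro y hy
        rw [dif_neg hy, SimpleGraph.pathGraph_adj]
        simp only [Fin.val_succ, Fin.val_zero]
        constructor
        · rintro (h | h)
          · have h0 : ((e' ⟨y, hy⟩) : Fin (m+1)).val = (e' t').val := by omega
            have : (⟨y, hy⟩ : V') = t' := e'.injective (Fin.val_injective h0)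
            have : y = t := congrArg Subtype.val this
            rw [this]; exact hts
          · omega
        · intro h
          left
          have hyt : y = t := huniq y h
          have : (⟨y, hy⟩ : V') = t' := Subtype.ext hyt
          rw [this, he']
      by_cases ha : a = s <;> by_cases hb : b = s
      · subst ha; subst hb
        rw [dif_pos rfl]
        simp [SimpleGraph.irrefl]
      · subst ha
        rw [dif_pos rfl]
        exact keys b hb
      · subst hb
        rw [dif_pos rfl]
        constructor
        · intro h
          exact (G.adj_symm ((keys a ha).mp h.symm))
        · intro h
          exact ((keys a ha).mpr h.symm).symm
      · exact key a b ha hb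
    · simp

section Aux
variable {V : Type*} [Fintype V] [Nonempty V] (G : SimpleGraph V)

lemma fracZ_set_nonempty :
    Set.Nonempty {x : ℝ | ∃ ω : V → ℝ, (∀ v, 0 ≤ ω v) ∧
      (∀ F : Finset V, IsFort G F → 1 ≤ ∑ v ∈ F, ω v) ∧ x = ∑ v, ω v} := by
  refine ⟨(Fintype.card V : ℝ), fun _ => 1, fun v => zero_le_one, ?_, by simp⟩
  intro F hF
  have : (1:ℝ) ≤ F.card := by exact_mod_cast hF.1.card_pos
  simpa using this

lemma fracZ_set_bddBelow :
    BddBelow {x : ℝ | ∃ ω : V → ℝ, (∀ v, 0 ≤ ω v) ∧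
      (∀ F : Finset V, IsFort G F → 1 ≤ ∑ v ∈ F, ω v) ∧ x = ∑ v, ω v} := by
  refine ⟨0, ?_⟩
  rintro x ⟨ω, h0, -, rfl⟩
  exact Finset.sum_nonneg (fun v _ => h0 v)

lemma univ_isFort : IsFort G (univ : Finset V) :=
  ⟨univ_nonempty, fun v hv => absurd (mem_univ v) hv⟩

lemma one_le_fracZ : 1 ≤ fracZ G := by
  unfold fracZ
  refine le_csInf (fracZ_set_nonempty G) ?_
  rintro x ⟨ω, h0, hF, rfl⟩
  simpa using hF univ (univ_isFort G)

lemma fort_contains_endpoint {n : ℕ} (e : G ≃g SimpleGraph.pathGraph n) (hn : 0 < n)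
    {F : Finset V} (hF : IsFort G F) : e.symm ⟨0, hn⟩ ∈ F := by
  obtain ⟨x, hxF, hmin⟩ := F.exists_min_image (fun x => (e x).val) hF.1
  have hx0 : (e x).val = 0 := by
    by_contra h
    have hipos : 0 < (e x).val := Nat.pos_of_ne_zero h
    have hi : (e x).val < n := (e x).isLt
    set w := e.symm ⟨(e x).val - 1, by omega⟩ with hw
    have hwval : (e w).val = (e x).val - 1 := by rw [hw, e.apply_symm_apply]
    have hwF : w ∉ F := by
      intro hwmem
      have := hmin w hwmem
      omega
    refine hF.2 w hwF ⟨x, ⟨hxF, ?_⟩, ?_⟩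
    · refine e.map_rel_iff.mp ?_
      rw [SimpleGraph.pathGraph_adj, hwval]
      left; omega
    · rintro u ⟨huF, hadj⟩
      have hpu := e.map_rel_iff.mpr hadj
      rw [SimpleGraph.pathGraph_adj, hwval] at hpu
      have hmu := hmin u huF
      rcases hpu with h' | h'
      · have : (e u) = (e x) := Fin.val_injective (by omega)
        exact e.injective this
      · omega
  have hex : e x = ⟨0, hn⟩ := Fin.val_injective (by simpa using hx0)
  have : e.symm ⟨0, hn⟩ = x := by rw [← hex, e.symm_apply_apply]
  rwa [this]

lemma fracZ_le_one_of_path {n : ℕ} (hn : 0 < n) (e : G ≃g SimpleGraph.pathGraph n) :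
    fracZ G ≤ 1 := by
  classical
  unfold fracZ
  refine csInf_le (fracZ_set_bddBelow G) ?_
  refine ⟨fun v => if v = e.symm ⟨0, hn⟩ then 1 else 0, ?_, ?_, ?_⟩
  · intro v; simp only; split <;> norm_num
  · intro F hF
    rw [Finset.sum_ite_eq' F (e.symm ⟨0, hn⟩) (fun _ => (1:ℝ)),
      if_pos (fort_contains_endpoint G e hn hF)]
  · rw [Finset.sum_ite_eq' univ (e.symm ⟨0, hn⟩) (fun _ => (1:ℝ)), if_pos (mem_univ _)]

end Aux


/-- `Z*(G) = 1` iff `G` is a path graph. -/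
theorem fracZ_eq_one_iff_path {V : Type*} [Fintype V] [Nonempty V] (G : SimpleGraph V) :
    fracZ G = 1 ↔ ∃ n : ℕ, 1 ≤ n ∧ Nonempty (G ≃g SimpleGraph.pathGraph n) := by
  classical
  constructor
  · intro h1
    refine ⟨Fintype.card V, Fintype.card_pos, ?_⟩
    by_contra hno
    have hc2 : 1 < Fintype.card V := by
      rcases Nat.lt_or_ge (Fintype.card V) 2 with h | h
      · have hc1 : Fintype.card V = 1 := by
          have := Fintype.card_pos (α := V); omega
        exact absurd (hc1 ▸ iso_one G hc1) hno
      · omega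
    set N := Fintype.card V with hN
    -- for each v, a fort avoiding v
    set Fv : V → Finset V := fun v => univ.filter (fun x => ¬ ZFForced G {v} x) with hFv
    have hnotZFS : ∀ v : V, ∃ x, ¬ ZFForced G {v} x := by
      intro v
      by_contra hcon
      push_neg at hcon
      obtain ⟨e, -⟩ := path_of_single_force (Fintype.card V) V G v rfl hcon
      exact hno ⟨e⟩
    have hFne : ∀ v, (Fv v).Nonempty := by
      intro v
      obtain ⟨x, hx⟩ := hnotZFS v
      exact ⟨x, by simp [hFv, hx]⟩
    have hvnot : ∀ v, v ∉ Fv v := by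
      intro v
      simp only [hFv, Finset.mem_filter, Finset.mem_univ, true_and, not_not]
      exact ZFForced.init v rfl
    have hfort : ∀ v, IsFort G (Fv v) := by
      intro v
      refine ⟨hFne v, ?_⟩
      intro w hw hex
      have hwZ : ZFForced G {v} w := by
        simpa [hFv] using hw
      obtain ⟨u, ⟨huF, hadj⟩, huniq⟩ := hex
      have huZ : ZFForced G {v} u := by
        refine ZFForced.force w u hadj hwZ ?_
        intro x hx hxu
        by_contra hxZ
        exact hxu (huniq x ⟨by simp [hFv, hxZ], hx⟩)
      have hun : ¬ ZFForced G {v} u := by simpa [hFv] using huF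
      exact hun huZ
    -- counting argument
    have hNR : (2:ℝ) ≤ (N:ℝ) := by exact_mod_cast hc2
    have key : ∀ ω : V → ℝ, (∀ v, 0 ≤ ω v) →
        (∀ F : Finset V, IsFort G F → 1 ≤ ∑ v ∈ F, ω v) →
        (N:ℝ) ≤ ((N:ℝ) - 1) * ∑ v, ω v := by
      intro ω h0 hFc
      have h1' : (N:ℝ) ≤ ∑ v : V, ∑ u ∈ Fv v, ω u := by
        calc (N:ℝ) = ∑ _v : V, (1:ℝ) := by simp [hN]
        _ ≤ _ := Finset.sum_le_sum (fun v _ => hFc (Fv v) (hfort v))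
      have h2' : ∑ v : V, ∑ u ∈ Fv v, ω u
          = ∑ u : V, ∑ v : V, (if u ∈ Fv v then ω u else 0) := by
        rw [Finset.sum_comm]
        refine Finset.sum_congr rfl ?_
        intro v _
        rw [Finset.sum_ite_mem, Finset.univ_inter]
      have h3' : ∀ u : V, ∑ v : V, (if u ∈ Fv v then ω u else 0) ≤ ((N:ℝ) - 1) * ω u := by
        intro u
        have hle : ∀ v : V, (if u ∈ Fv v then ω u else 0) ≤ (if v = u then 0 else ω u) := by
          intro v
          by_cases hv : v = u
          · subst hv
            rw [if_neg (hvnot v), if_pos rfl]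
          · rw [if_neg hv]
            split
            · exact le_refl _
            · exact h0 u
        calc ∑ v : V, (if u ∈ Fv v then ω u else 0)
            ≤ ∑ v : V, (if v = u then 0 else ω u) := Finset.sum_le_sum (fun v _ => hle v)
        _ = ∑ v : V, (ω u - if v = u then ω u else 0) := by
            refine Finset.sum_congr rfl (fun v _ => by split <;> ring)
        _ = ((N:ℝ) - 1) * ω u := by
            rw [Finset.sum_sub_distrib, Finset.sum_const,
              Finset.sum_ite_eq' univ u (fun _ => ω u), if_pos (mem_univ u)]
            simp [hN]
            ring
      calc (N:ℝ) ≤ ∑ u : V, ∑ v : V, (if u ∈ Fv v then ω u else 0) := h2' ▸ h1'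
      _ ≤ ∑ u : V, ((N:ℝ) - 1) * ω u := Finset.sum_le_sum (fun u _ => h3' u)
      _ = ((N:ℝ) - 1) * ∑ v, ω v := by rw [Finset.mul_sum]
    have hlb : (N:ℝ)/((N:ℝ)-1) ≤ fracZ G := by
      unfold fracZ
      refine le_csInf (fracZ_set_nonempty G) ?_
      rintro x ⟨ω, h0, hFc, rfl⟩
      rw [div_le_iff₀ (by linarith)]
      have := key ω h0 hFc
      linarith
    rw [h1] at hlb
    rw [div_le_one (by linarith)] at hlb
    linarith
  · rintro ⟨n, hn1, ⟨e⟩⟩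
    exact le_antisymm (fracZ_le_one_of_path G (by omega) e) (one_le_fracZ G)
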